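/- For two strictly positive probability vectors p and p̃ on a finite set with n ≥ 2 elements, where p̃ is obtained from p by fixing p̃_i = t ∈ (0,1) for some index i, the choice p̃_k = p_k(1−t)/(1−p_i) for k ≠ i minimizes D(p̃,p) = log max_k p̃_k/p_k − log min_k p̃_k/p_k among all strictly positive probability vectors p̃ with p̃_i = t, and achieves the value |log(t/p_i) − log((1−t)/(1−p_i))|. -/
import Mathlib


open Finset

/-- Chan–Darwiche optimality of proportional scaling for a single probability vector:
fixing the `i`-th entry to `t`, the proportional completion minimizes the CD distance
and achieves the value `|log(t/pᵢ) − log((1−t)/(1−pᵢ))|`. -/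
theorem stmt_10 {n : ℕ} (p : Fin (n + 2) → ℝ)
    (hp : ∀ j, 0 < p j) (hpsum : ∑ j, p j = 1)
    (i : Fin (n + 2)) (t : ℝ) (ht : 0 < t) (ht1 : t < 1)
    (ppro : Fin (n + 2) → ℝ)
    (h1 : ppro i = t)
    (h2 : ∀ j, j ≠ i → ppro j = p j * ((1 - t) / (1 - p i))) :
    (Real.log (Finset.univ.sup' Finset.univ_nonempty (fun j => ppro j / p j))
        - Real.log (Finset.univ.inf' Finset.univ_nonempty (fun j => ppro j / p j))
      = |Real.log (t / p i) - Real.log ((1 - t) / (1 - p i))|)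
    ∧ ∀ q : Fin (n + 2) → ℝ, (∀ j, 0 < q j) → ∑ j, q j = 1 → q i = t →
      Real.log (Finset.univ.sup' Finset.univ_nonempty (fun j => ppro j / p j))
          - Real.log (Finset.univ.inf' Finset.univ_nonempty (fun j => ppro j / p j))
        ≤ Real.log (Finset.univ.sup' Finset.univ_nonempty (fun j => q j / p j))
          - Real.log (Finset.univ.inf' Finset.univ_nonempty (fun j => q j / p j)) := by
  obtain ⟨j0, hj0⟩ := exists_ne i
  have hsump : ∑ j ∈ univ.erase i, p j = 1 - p i := by
    rw [Finset.sum_erase_eq_sub (mem_univ i), hpsum]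
  have hpi1 : p i < 1 := by
    have hpos : 0 < ∑ j ∈ univ.erase i, p j :=
      Finset.sum_pos (fun j _ => hp j) ⟨j0, Finset.mem_erase.mpr ⟨hj0, mem_univ j0⟩⟩
    linarith [hsump ▸ hpos]
  set a := t / p i with ha
  set b := (1 - t) / (1 - p i) with hb
  have hpa : 0 < a := div_pos ht (hp i)
  have hpb : 0 < b := div_pos (by linarith) (by linarith)
  have hfa : ppro i / p i = a := by rw [h1]
  have hfb : ∀ j, j ≠ i → ppro j / p j = b := by
    intro j hj
    rw [h2 j hj, hb, mul_comm, mul_div_assoc, div_self (hp j).ne', mul_one]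
  have hsup : univ.sup' univ_nonempty (fun j => ppro j / p j) = max a b := by
    apply le_antisymm
    · apply Finset.sup'_le
      intro j _
      by_cases hj : j = i
      · subst hj; rw [hfa]; exact le_max_left _ _
      · rw [hfb j hj]; exact le_max_right _ _
    · apply max_le
      · rw [← hfa]; exact Finset.le_sup' (fun j => ppro j / p j) (mem_univ i)
      · rw [← hfb j0 hj0]; exact Finset.le_sup' (fun j => ppro j / p j) (mem_univ j0)
  have hinf : univ.inf' univ_nonempty (fun j => ppro j / p j) = min a b := by
    apply le_antisymm
    · apply le_min
      · rw [← hfa]; exact Finset.inf'_le (fun j => ppro j / p j) (mem_univ i)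
      · rw [← hfb j0 hj0]; exact Finset.inf'_le (fun j => ppro j / p j) (mem_univ j0)
    · apply Finset.le_inf'
      intro j _
      by_cases hj : j = i
      · subst hj; rw [hfa]; exact min_le_left _ _
      · rw [hfb j hj]; exact min_le_right _ _
  have hval : Real.log (max a b) - Real.log (min a b) = |Real.log a - Real.log b| := by
    rcases le_total a b with h | h
    · rw [max_eq_right h, min_eq_left h, abs_sub_comm, abs_of_nonneg]
      exact sub_nonneg.mpr (Real.log_le_log hpa h)
    · rw [max_eq_left h, min_eq_right h, abs_of_nonneg]
      exact sub_nonneg.mpr (Real.log_le_log hpb h)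
  constructor
  · rw [hsup, hinf, hval]
  · intro q hq hqsum hqi
    set S := univ.sup' univ_nonempty (fun j => q j / p j) with hS
    set I := univ.inf' univ_nonempty (fun j => q j / p j) with hI
    have hsumq : ∑ j ∈ univ.erase i, q j = 1 - t := by
      rw [Finset.sum_erase_eq_sub (mem_univ i), hqsum, hqi]
    have hbmul : b * (1 - p i) = 1 - t := by
      rw [hb]; exact div_mul_cancel₀ _ (by linarith : (1:ℝ) - p i ≠ 0)
    have hne : (univ.erase i).Nonempty := ⟨j0, Finset.mem_erase.mpr ⟨hj0, mem_univ j0⟩⟩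
    have haS : a ≤ S := by
      have h : q i / p i = a := by rw [hqi]
      rw [← h]; exact Finset.le_sup' (fun j => q j / p j) (mem_univ i)
    have haI : I ≤ a := by
      have h : q i / p i = a := by rw [hqi]
      rw [← h]; exact Finset.inf'_le (fun j => q j / p j) (mem_univ i)
    have hbS : b ≤ S := by
      by_contra hcon
      push_neg at hcon
      have hlt : ∀ j ∈ univ.erase i, q j < b * p j := by
        intro j _
        have h1' : q j / p j ≤ S := Finset.le_sup' (fun j => q j / p j) (mem_univ j)
        have h2' : q j / p j < b := lt_of_le_of_lt h1' hcon
        have := (div_lt_iff₀ (hp j)).mp h2'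
        linarith
      have hstrict := Finset.sum_lt_sum_of_nonempty hne hlt
      rw [hsumq, ← Finset.mul_sum, hsump, hbmul] at hstrict
      exact lt_irrefl _ hstrict
    have hbI : I ≤ b := by
      by_contra hcon
      push_neg at hcon
      have hlt : ∀ j ∈ univ.erase i, b * p j < q j := by
        intro j _
        have h1' : I ≤ q j / p j := Finset.inf'_le (fun j => q j / p j) (mem_univ j)
        have h2' : b < q j / p j := lt_of_lt_of_le hcon h1'
        have := (lt_div_iff₀ (hp j)).mp h2'
        linarith
      have hstrict := Finset.sum_lt_sum_of_nonempty hne hlt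
      rw [hsumq, ← Finset.mul_sum, hsump, hbmul] at hstrict
      exact lt_irrefl _ hstrict
    have hIpos : 0 < I := by
      obtain ⟨j, _, hj⟩ := Finset.exists_mem_eq_inf' univ_nonempty (fun j => q j / p j)
      rw [hI, hj]
      exact div_pos (hq j) (hp j)
    have hmaxS : max a b ≤ S := max_le haS hbS
    have hImin : I ≤ min a b := le_min haI hbI
    have hl1 : Real.log (max a b) ≤ Real.log S :=
      Real.log_le_log (lt_max_of_lt_left hpa) hmaxS
    have hl2 : Real.log I ≤ Real.log (min a b) := Real.log_le_log hIpos hImin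
    rw [hsup, hinf]
    linarith
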